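/- arXiv:2406.08781 — 2 statements merged into one kernel-verified Lean document; each statement's English description precedes it below -/
import Mathlib

section
/- Define p(s) = 1 - Γ_inc(m, c/s)/Γ(m) for s > 0, where c = m(2^{R_t} - 1) > 0 and m is a positive integer. Then lim_{s→∞} -log(p(s)²(2 + p(s)))/log(s) = 2m. -/
open MeasureTheory Real Filter

theorem diversity_order_two_pairs (m : ℕ) (hm : 0 < m) (c : ℝ) (hc : 0 < c)
    (p : ℝ → ℝ)
    (hp : ∀ s : ℝ, 0 < s →
      p s = 1 - (∫ a in Set.Ioi (c / s), a ^ ((m : ℝ) - 1) * Real.exp (-a)) / Real.Gamma m) :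
    Tendsto (fun s : ℝ => -Real.log ((p s) ^ 2 * (2 + p s)) / Real.log s)
      atTop (nhds (2 * m)) := by
  have hm' : (0:ℝ) < m := Nat.cast_pos.mpr hm
  have hm1 : (1:ℝ) ≤ m := Nat.one_le_cast.mpr hm
  have hG : 0 < Real.Gamma m := Real.Gamma_pos_of_pos hm'
  have hmG : 0 < (m:ℝ) * Real.Gamma m := mul_pos hm' hG
  set f : ℝ → ℝ := fun a => a ^ ((m:ℝ) - 1) * Real.exp (-a) with hfdef
  have hint : IntegrableOn f (Set.Ioi 0) := by
    have h := Real.GammaIntegral_convergent hm'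
    exact h.congr_fun (fun x _ => mul_comm _ _) measurableSet_Ioi
  have hΓ : Real.Gamma (m:ℝ) = ∫ a in Set.Ioi (0:ℝ), f a := by
    rw [Real.Gamma_eq_integral hm']
    exact setIntegral_congr_fun measurableSet_Ioi fun x _ => mul_comm _ _
  -- p s is the normalized lower incomplete gamma
  have hps : ∀ s : ℝ, 0 < s →
      p s = (∫ a in Set.Ioc 0 (c / s), f a) / Real.Gamma m := by
    intro s hs
    have hy : 0 < c / s := div_pos hc hs
    have hsplit : Real.Gamma (m:ℝ) =
        (∫ a in Set.Ioc 0 (c/s), f a) + ∫ a in Set.Ioi (c/s), f a := by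
      rw [hΓ, ← Set.Ioc_union_Ioi_eq_Ioi hy.le,
        setIntegral_union (Set.Ioc_disjoint_Ioi le_rfl) measurableSet_Ioi
          (hint.mono_set Set.Ioc_subset_Ioi_self)
          (hint.mono_set (Set.Ioi_subset_Ioi hy.le))]
    rw [hp s hs]
    have : (∫ a in Set.Ioi (c/s), f a) =
        Real.Gamma m - ∫ a in Set.Ioc 0 (c/s), f a := by linarith [hsplit]
    rw [this]
    field_simp
    ring
  -- bounds on the incomplete gamma integral
  have hrpow_int : ∀ y : ℝ, 0 < y →
      (∫ a in Set.Ioc 0 y, a ^ ((m:ℝ) - 1)) = y ^ (m:ℝ) / m := by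
    intro y hy
    rw [← intervalIntegral.integral_of_le hy.le,
      integral_rpow (Or.inl (by linarith : (-1:ℝ) < (m:ℝ) - 1))]
    rw [sub_add_cancel, Real.zero_rpow (by positivity : (m:ℝ) ≠ 0), sub_zero]
  have hIub : ∀ y : ℝ, 0 < y →
      (∫ a in Set.Ioc 0 y, f a) ≤ y ^ (m:ℝ) / m := by
    intro y hy
    rw [← hrpow_int y hy]
    refine setIntegral_mono_on (hint.mono_set Set.Ioc_subset_Ioi_self) ?_
      measurableSet_Ioc ?_
    · rw [← intervalIntegrable_iff_integrableOn_Ioc_of_le hy.le]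
      exact intervalIntegral.intervalIntegrable_rpow' (by linarith)
    · intro x hx
      have hx0 : 0 < x := hx.1
      have : Real.exp (-x) ≤ 1 := Real.exp_le_one_iff.mpr (by linarith)
      calc x ^ ((m:ℝ)-1) * Real.exp (-x) ≤ x ^ ((m:ℝ)-1) * 1 := by
            exact mul_le_mul_of_nonneg_left this (Real.rpow_nonneg hx0.le _)
        _ = x ^ ((m:ℝ)-1) := mul_one _
  have hIlb : ∀ y : ℝ, 0 < y →
      Real.exp (-y) * (y ^ (m:ℝ) / m) ≤ ∫ a in Set.Ioc 0 y, f a := by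
    intro y hy
    have heq : Real.exp (-y) * (y ^ (m:ℝ) / m)
        = ∫ a in Set.Ioc 0 y, Real.exp (-y) * a ^ ((m:ℝ) - 1) := by
      rw [MeasureTheory.integral_const_mul, hrpow_int y hy]
    rw [heq]
    refine setIntegral_mono_on ?_ (hint.mono_set Set.Ioc_subset_Ioi_self)
      measurableSet_Ioc ?_
    · refine Integrable.const_mul ?_ _
      rw [← IntegrableOn, ← intervalIntegrable_iff_integrableOn_Ioc_of_le hy.le]
      exact intervalIntegral.intervalIntegrable_rpow' (by linarith)
    · intro x hx
      have hx0 : 0 < x := hx.1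
      have : Real.exp (-y) ≤ Real.exp (-x) := Real.exp_le_exp.mpr (by linarith [hx.2])
      calc Real.exp (-y) * x ^ ((m:ℝ)-1) ≤ Real.exp (-x) * x ^ ((m:ℝ)-1) :=
            mul_le_mul_of_nonneg_right this (Real.rpow_nonneg hx0.le _)
        _ = x ^ ((m:ℝ)-1) * Real.exp (-x) := mul_comm _ _
  -- the squeeze functions
  set K1 : ℝ := 2 * Real.log ((m:ℝ) * Real.Gamma m) - 2 * m * Real.log c - Real.log 3 with hK1
  set K2 : ℝ := 2 * Real.log ((m:ℝ) * Real.Gamma m) - 2 * m * Real.log c - Real.log 2 with hK2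
  have hlo : Tendsto (fun s : ℝ => (2 * (m:ℝ) * Real.log s + K1) / Real.log s)
      atTop (nhds (2 * m)) := by
    have h1 : Tendsto (fun s : ℝ => 2 * (m:ℝ) + K1 / Real.log s) atTop
        (nhds (2 * m + 0)) :=
      tendsto_const_nhds.add (tendsto_const_nhds.div_atTop Real.tendsto_log_atTop)
    rw [add_zero] at h1
    refine h1.congr' ?_
    filter_upwards [eventually_gt_atTop (1:ℝ)] with s hs
    have hls : Real.log s ≠ 0 := (Real.log_pos hs).ne'
    field_simp
    try ring
  have hhi : Tendsto (fun s : ℝ => (2 * c / s + 2 * (m:ℝ) * Real.log s + K2) / Real.log s)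
      atTop (nhds (2 * m)) := by
    have h0 : Tendsto (fun s : ℝ => 2 * c / s + K2) atTop (nhds (0 + K2)) :=
      (tendsto_const_nhds.div_atTop tendsto_id).add tendsto_const_nhds
    have h1 : Tendsto (fun s : ℝ => (2 * c / s + K2) / Real.log s) atTop (nhds 0) :=
      h0.div_atTop Real.tendsto_log_atTop
    have h2 : Tendsto (fun s : ℝ => 2 * (m:ℝ) + (2 * c / s + K2) / Real.log s) atTop
        (nhds (2 * m + 0)) := tendsto_const_nhds.add h1
    rw [add_zero] at h2
    refine h2.congr' ?_
    filter_upwards [eventually_gt_atTop (1:ℝ)] with s hs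
    have hls : Real.log s ≠ 0 := (Real.log_pos hs).ne'
    field_simp
    try ring
  have hbound : ∀ᶠ s : ℝ in atTop,
      (2 * (m:ℝ) * Real.log s + K1) / Real.log s ≤
        -Real.log ((p s) ^ 2 * (2 + p s)) / Real.log s ∧
      -Real.log ((p s) ^ 2 * (2 + p s)) / Real.log s ≤
        (2 * c / s + 2 * (m:ℝ) * Real.log s + K2) / Real.log s := by
    filter_upwards [eventually_gt_atTop (1:ℝ), eventually_ge_atTop c,
      eventually_ge_atTop (c / ((m:ℝ) * Real.Gamma m))] with s hs1 hsc hsmg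
    have hs : (0:ℝ) < s := lt_trans one_pos hs1
    set y : ℝ := c / s with hydef
    have hy : 0 < y := div_pos hc hs
    have hy1 : y ≤ 1 := (div_le_one hs).mpr hsc
    have hymg : y ≤ (m:ℝ) * Real.Gamma m := by
      rw [hydef, div_le_iff₀ hs]
      have h := mul_le_mul_of_nonneg_right hsmg hmG.le
      rw [div_mul_cancel₀ _ hmG.ne'] at h
      linarith
    have hls : 0 < Real.log s := Real.log_pos hs1
    -- bounds for p s
    have hplb : Real.exp (-y) * y ^ (m:ℝ) / ((m:ℝ) * Real.Gamma m) ≤ p s := by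
      rw [hps s hs, div_le_div_iff₀ hmG hG]
      have h1 := hIlb y hy
      calc Real.exp (-y) * y ^ (m:ℝ) * Real.Gamma m
          = (Real.exp (-y) * (y ^ (m:ℝ) / m)) * ((m:ℝ) * Real.Gamma m) := by
            field_simp
        _ ≤ (∫ a in Set.Ioc 0 y, f a) * ((m:ℝ) * Real.Gamma m) :=
            mul_le_mul_of_nonneg_right h1 hmG.le
    have hpub : p s ≤ y ^ (m:ℝ) / ((m:ℝ) * Real.Gamma m) := by
      rw [hps s hs, div_le_div_iff₀ hG hmG]
      have h1 := hIub y hy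
      calc (∫ a in Set.Ioc 0 y, f a) * ((m:ℝ) * Real.Gamma m)
          ≤ (y ^ (m:ℝ) / m) * ((m:ℝ) * Real.Gamma m) :=
            mul_le_mul_of_nonneg_right h1 hmG.le
        _ = y ^ (m:ℝ) * Real.Gamma m := by field_simp
    have hppos : 0 < p s := lt_of_lt_of_le (by positivity) hplb
    have hp1 : p s ≤ 1 := by
      refine hpub.trans ?_
      rw [div_le_one hmG]
      calc y ^ (m:ℝ) ≤ y ^ (1:ℝ) :=
            Real.rpow_le_rpow_of_exponent_ge hy hy1 hm1
        _ = y := Real.rpow_one y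
        _ ≤ (m:ℝ) * Real.Gamma m := hymg
    have hlog : Real.log ((p s) ^ 2 * (2 + p s))
        = 2 * Real.log (p s) + Real.log (2 + p s) := by
      rw [Real.log_mul (by positivity) (by positivity), Real.log_pow]
      norm_num
    have hlogy : Real.log y = Real.log c - Real.log s := Real.log_div hc.ne' hs.ne'
    have hlogp_ub : Real.log (p s) ≤ (m:ℝ) * Real.log y -
        Real.log ((m:ℝ) * Real.Gamma m) := by
      calc Real.log (p s) ≤ Real.log (y ^ (m:ℝ) / ((m:ℝ) * Real.Gamma m)) :=
            Real.log_le_log hppos hpub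
        _ = (m:ℝ) * Real.log y - Real.log ((m:ℝ) * Real.Gamma m) := by
            rw [Real.log_div (by positivity) hmG.ne', Real.log_rpow hy]
    have hlogp_lb : -y + (m:ℝ) * Real.log y - Real.log ((m:ℝ) * Real.Gamma m)
        ≤ Real.log (p s) := by
      calc -y + (m:ℝ) * Real.log y - Real.log ((m:ℝ) * Real.Gamma m)
          = Real.log (Real.exp (-y) * y ^ (m:ℝ) / ((m:ℝ) * Real.Gamma m)) := by
            rw [Real.log_div (by positivity) hmG.ne',
              Real.log_mul (Real.exp_ne_zero _) (by positivity),
              Real.log_exp, Real.log_rpow hy]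
        _ ≤ Real.log (p s) := Real.log_le_log (by positivity) hplb
    have hlog2p_lb : Real.log 2 ≤ Real.log (2 + p s) :=
      Real.log_le_log two_pos (by linarith)
    have hlog2p_ub : Real.log (2 + p s) ≤ Real.log 3 :=
      Real.log_le_log (by linarith) (by linarith)
    rw [hlogy] at hlogp_ub hlogp_lb
    rw [hydef] at hlogp_lb
    constructor
    · rw [div_le_div_iff_of_pos_right hls, hlog, hK1]
      linarith
    · rw [div_le_div_iff_of_pos_right hls, hlog, hK2, mul_div_assoc]
      linarith
  exact tendsto_of_tendsto_of_tendsto_of_le_of_le' hlo hhi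
    (hbound.mono fun s h => h.1) (hbound.mono fun s h => h.2)
end

section
/- Define p(s) = 1 - Γ_inc(m, c/s)/Γ(m) with c > 0, m a positive integer, and P_out(s) = p(s)^N (M + p(s)^{N-1}) for integers N ≥ 1, M ≥ 1. Then the diversity order d = -lim_{s→∞} log(P_out(s))/log(s) exists and equals N·m. -/
open MeasureTheory Real Filter

theorem diversity_order_general (m : ℕ) (hm : 0 < m) (c : ℝ) (hc : 0 < c)
    (N M : ℕ) (hN : 1 ≤ N) (hM : 1 ≤ M)
    (p P_out : ℝ → ℝ)
    (hp : ∀ s : ℝ, 0 < s →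
      p s = 1 - (∫ a in Set.Ioi (c / s), a ^ ((m : ℝ) - 1) * Real.exp (-a)) / Real.Gamma m)
    (hP : ∀ s : ℝ, P_out s = (p s) ^ N * ((M : ℝ) + (p s) ^ (N - 1))) :
    Tendsto (fun s : ℝ => -(Real.log (P_out s) / Real.log s)) atTop
      (nhds ((N : ℝ) * m)) := by
  have hmR : (0:ℝ) < m := by exact_mod_cast hm
  have hΓ : 0 < Real.Gamma m := Real.Gamma_pos_of_pos hmR
  have h_int : IntegrableOn (fun a : ℝ => a ^ ((m : ℝ) - 1) * Real.exp (-a)) (Set.Ioi 0) := by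
    simpa [mul_comm] using Real.GammaIntegral_convergent hmR
  -- closed form for p
  have hpG : ∀ s : ℝ, 0 < s →
      p s = (∫ a in Set.Ioc 0 (c/s), a ^ (m - 1) * Real.exp (-a)) / Real.Gamma m := by
    intro s hs
    have hy : 0 < c / s := div_pos hc hs
    set y := c / s
    have hsplit : (∫ a in Set.Ioi (0:ℝ), a ^ ((m : ℝ) - 1) * Real.exp (-a))
        = (∫ a in Set.Ioc 0 y, a ^ ((m : ℝ) - 1) * Real.exp (-a))
          + ∫ a in Set.Ioi y, a ^ ((m : ℝ) - 1) * Real.exp (-a) := by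
      rw [← setIntegral_union (Set.Ioc_disjoint_Ioi le_rfl) measurableSet_Ioi
        (h_int.mono_set Set.Ioc_subset_Ioi_self) (h_int.mono_set (Set.Ioi_subset_Ioi hy.le)),
        Set.Ioc_union_Ioi_eq_Ioi hy.le]
    have hG : Real.Gamma m = ∫ a in Set.Ioi (0:ℝ), a ^ ((m : ℝ) - 1) * Real.exp (-a) := by
      rw [Real.Gamma_eq_integral hmR]; simp [mul_comm]
    have hcongr : (∫ a in Set.Ioc (0:ℝ) y, a ^ ((m : ℝ) - 1) * Real.exp (-a))
        = ∫ a in Set.Ioc (0:ℝ) y, a ^ (m - 1) * Real.exp (-a) := by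
      refine setIntegral_congr_fun measurableSet_Ioc (fun a ha => ?_)
      rw [show (m:ℝ) - 1 = ((m - 1 : ℕ) : ℝ) by push_cast [Nat.cast_sub hm]; ring,
        Real.rpow_natCast]
    have hJ : (∫ a in Set.Ioi y, a ^ ((m : ℝ) - 1) * Real.exp (-a))
        = Real.Gamma m - ∫ a in Set.Ioc 0 y, a ^ (m - 1) * Real.exp (-a) := by
      rw [hG, hsplit, hcongr]; ring
    rw [hp s hs, hJ]
    field_simp
    ring
  -- bounds on the lower incomplete gamma integral
  have hGbounds : ∀ y : ℝ, 0 < y →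
      Real.exp (-y) * (y ^ m / m) ≤ (∫ a in Set.Ioc 0 y, a ^ (m - 1) * Real.exp (-a))
      ∧ (∫ a in Set.Ioc 0 y, a ^ (m - 1) * Real.exp (-a)) ≤ y ^ m / m := by
    intro y hy
    have hmono : ∫ a in Set.Ioc (0:ℝ) y, a ^ (m-1) = y ^ m / m := by
      rw [← intervalIntegral.integral_of_le hy.le, integral_pow]
      rw [Nat.sub_add_cancel hm]
      rw [show ((m-1:ℕ):ℝ)+1 = m by push_cast [Nat.cast_sub hm]; ring]
      simp [zero_pow hm.ne']
    have hcont : Continuous (fun a : ℝ => a ^ (m-1) * Real.exp (-a)) := by fun_prop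
    have hint1 : IntegrableOn (fun a : ℝ => a ^ (m-1) * Real.exp (-a)) (Set.Ioc 0 y) :=
      hcont.integrableOn_Ioc
    have hint2 : IntegrableOn (fun a : ℝ => a ^ (m-1)) (Set.Ioc (0:ℝ) y) :=
      (continuous_pow _).integrableOn_Ioc
    have hint3 : IntegrableOn (fun a : ℝ => a ^ (m-1) * Real.exp (-y)) (Set.Ioc (0:ℝ) y) :=
      (by fun_prop : Continuous (fun a : ℝ => a ^ (m-1) * Real.exp (-y))).integrableOn_Ioc
    constructor
    · have h : ∫ a in Set.Ioc (0:ℝ) y, a ^ (m-1) * Real.exp (-y)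
          ≤ ∫ a in Set.Ioc (0:ℝ) y, a ^ (m-1) * Real.exp (-a) := by
        refine setIntegral_mono_on hint3 hint1 measurableSet_Ioc (fun a ha => ?_)
        have ha0 : 0 ≤ a ^ (m-1) := pow_nonneg ha.1.le _
        exact mul_le_mul_of_nonneg_left (Real.exp_le_exp.2 (by linarith [ha.2])) ha0
      calc Real.exp (-y) * (y ^ m / m)
          = ∫ a in Set.Ioc (0:ℝ) y, a ^ (m-1) * Real.exp (-y) := by
            rw [integral_mul_const, hmono]; ring
        _ ≤ _ := h
    · calc (∫ a in Set.Ioc 0 y, a ^ (m - 1) * Real.exp (-a))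
          ≤ ∫ a in Set.Ioc (0:ℝ) y, a ^ (m-1) := by
            refine setIntegral_mono_on hint1 hint2 measurableSet_Ioc (fun a ha => ?_)
            have ha0 : 0 ≤ a ^ (m-1) := pow_nonneg ha.1.le _
            nlinarith [Real.exp_le_one_iff.2 (by linarith [ha.1] : -a ≤ 0), Real.exp_pos (-a)]
        _ = y ^ m / m := hmono
  set K : ℝ := Real.log (m * Real.Gamma m) - m * Real.log c with hKdef
  -- key bounds on -log P_out for s ≥ 1
  have key : ∀ s : ℝ, 1 ≤ s →
      ((N:ℝ)*m) * Real.log s + ((N:ℝ)*K - Real.log ((M:ℝ)+1)) ≤ -Real.log (P_out s)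
      ∧ -Real.log (P_out s) ≤ ((N:ℝ)*m) * Real.log s + (N:ℝ)*(K + c) := by
    intro s hs1
    have hs0 : (0:ℝ) < s := lt_of_lt_of_le one_pos hs1
    have hy : 0 < c / s := div_pos hc hs0
    set y := c / s with hydef
    have hyc : y ≤ c := div_le_self hc.le hs1
    obtain ⟨hGlo, hGhi⟩ := hGbounds y hy
    have hps : p s = (∫ a in Set.Ioc 0 y, a ^ (m - 1) * Real.exp (-a)) / Real.Gamma m :=
      hpG s hs0
    have hLpos : 0 < Real.exp (-y) * (y ^ m / m) / Real.Gamma m := by positivity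
    have hp_pos : 0 < p s := by
      rw [hps]; exact lt_of_lt_of_le hLpos (by gcongr)
    have hp_le1 : p s ≤ 1 := by
      have hI : 0 ≤ ∫ a in Set.Ioi y, a ^ ((m : ℝ) - 1) * Real.exp (-a) := by
        refine setIntegral_nonneg measurableSet_Ioi (fun a ha => ?_)
        have : (0:ℝ) < a := lt_trans hy ha
        positivity
      rw [hp s hs0]
      have := div_nonneg hI hΓ.le
      linarith
    have hly : Real.log y = Real.log c - Real.log s := Real.log_div hc.ne' hs0.ne'
    -- upper bound on log p
    have hlog_up : Real.log (p s) ≤ (m:ℝ) * Real.log y - Real.log (m * Real.Gamma m) := by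
      have hub : p s ≤ y ^ m / (m * Real.Gamma m) := by
        rw [hps, ← div_div]
        gcongr
      calc Real.log (p s) ≤ Real.log (y ^ m / (m * Real.Gamma m)) :=
            Real.log_le_log hp_pos hub
        _ = (m:ℝ) * Real.log y - Real.log (m * Real.Gamma m) := by
            rw [Real.log_div (show (y:ℝ) ^ m ≠ 0 by positivity)
                (show ((m:ℝ) * Real.Gamma m) ≠ 0 by positivity), Real.log_pow]
    -- lower bound on log p
    have hlog_lo : -y + (m:ℝ) * Real.log y - Real.log (m * Real.Gamma m) ≤ Real.log (p s) := by
      have hlb : Real.exp (-y) * y ^ m / (m * Real.Gamma m) ≤ p s := by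
        rw [hps]
        have : Real.exp (-y) * y ^ m / (m * Real.Gamma m)
            = Real.exp (-y) * (y ^ m / m) / Real.Gamma m := by ring
        rw [this]
        gcongr
      have hLpos' : (0:ℝ) < Real.exp (-y) * y ^ m / (m * Real.Gamma m) := by positivity
      calc -y + (m:ℝ) * Real.log y - Real.log (m * Real.Gamma m)
          = Real.log (Real.exp (-y) * y ^ m / (m * Real.Gamma m)) := by
            rw [Real.log_div (show Real.exp (-y) * y ^ m ≠ 0 by positivity)
                (show ((m:ℝ) * Real.Gamma m) ≠ 0 by positivity),
              Real.log_mul (Real.exp_ne_zero _) (show (y:ℝ) ^ m ≠ 0 by positivity),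
              Real.log_exp, Real.log_pow]
        _ ≤ Real.log (p s) := Real.log_le_log hLpos' hlb
    have h1 : (m:ℝ) * Real.log s + K ≤ -Real.log (p s) := by
      rw [hKdef]; rw [hly] at hlog_up; linarith
    have h2 : -Real.log (p s) ≤ (m:ℝ) * Real.log s + K + c := by
      rw [hKdef]; rw [hly] at hlog_lo; linarith
    have h1' := mul_le_mul_of_nonneg_left h1 (show (0:ℝ) ≤ (N:ℝ) by positivity)
    have h2' := mul_le_mul_of_nonneg_left h2 (show (0:ℝ) ≤ (N:ℝ) by positivity)
    have hq_pos : (0:ℝ) < (M:ℝ) + (p s) ^ (N-1) := by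
      have : (1:ℝ) ≤ (M:ℝ) := by exact_mod_cast hM
      have := pow_nonneg hp_pos.le (N-1)
      linarith
    have hlogP : Real.log (P_out s)
        = (N:ℝ) * Real.log (p s) + Real.log ((M:ℝ) + (p s) ^ (N-1)) := by
      rw [hP s, Real.log_mul (pow_ne_zero _ hp_pos.ne') hq_pos.ne', Real.log_pow]
    have hq_lo : (0:ℝ) ≤ Real.log ((M:ℝ) + (p s) ^ (N-1)) := by
      refine Real.log_nonneg ?_
      have : (1:ℝ) ≤ (M:ℝ) := by exact_mod_cast hM
      have := pow_nonneg hp_pos.le (N-1)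
      linarith
    have hq_hi : Real.log ((M:ℝ) + (p s) ^ (N-1)) ≤ Real.log ((M:ℝ)+1) := by
      refine Real.log_le_log hq_pos ?_
      have := pow_le_one₀ hp_pos.le hp_le1 (n := N-1)
      linarith
    constructor
    · rw [hlogP]; linarith
    · rw [hlogP]; linarith
  -- squeeze
  have hlogTop := Real.tendsto_log_atTop
  have hlo : Tendsto (fun s:ℝ => (N:ℝ)*m + ((N:ℝ)*K - Real.log ((M:ℝ)+1))/Real.log s)
      atTop (nhds ((N:ℝ)*m)) := by
    have := (tendsto_const_nhds (x := (N:ℝ)*K - Real.log ((M:ℝ)+1)) (f := atTop)).div_atTop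
      hlogTop
    simpa using (tendsto_const_nhds (x := (N:ℝ)*m) (f := atTop)).add this
  have hhi : Tendsto (fun s:ℝ => (N:ℝ)*m + ((N:ℝ)*(K + c))/Real.log s)
      atTop (nhds ((N:ℝ)*m)) := by
    have := (tendsto_const_nhds (x := (N:ℝ)*(K + c)) (f := atTop)).div_atTop hlogTop
    simpa using (tendsto_const_nhds (x := (N:ℝ)*m) (f := atTop)).add this
  refine tendsto_of_tendsto_of_tendsto_of_le_of_le' hlo hhi ?_ ?_
  · filter_upwards [eventually_ge_atTop (3:ℝ)] with s hs
    have hls : 0 < Real.log s := Real.log_pos (by linarith)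
    obtain ⟨hk1, _⟩ := key s (by linarith)
    rw [show -(Real.log (P_out s)/Real.log s) = (-Real.log (P_out s))/Real.log s by ring]
    have : (((N:ℝ)*m) * Real.log s + ((N:ℝ)*K - Real.log ((M:ℝ)+1)))/Real.log s
        ≤ (-Real.log (P_out s))/Real.log s := by gcongr
    calc (N:ℝ)*m + ((N:ℝ)*K - Real.log ((M:ℝ)+1))/Real.log s
        = (((N:ℝ)*m) * Real.log s + ((N:ℝ)*K - Real.log ((M:ℝ)+1)))/Real.log s := by
          field_simp
      _ ≤ _ := this
  · filter_upwards [eventually_ge_atTop (3:ℝ)] with s hs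
    have hls : 0 < Real.log s := Real.log_pos (by linarith)
    obtain ⟨_, hk2⟩ := key s (by linarith)
    rw [show -(Real.log (P_out s)/Real.log s) = (-Real.log (P_out s))/Real.log s by ring]
    have : (-Real.log (P_out s))/Real.log s
        ≤ (((N:ℝ)*m) * Real.log s + (N:ℝ)*(K + c))/Real.log s := by gcongr
    calc (-Real.log (P_out s))/Real.log s ≤ _ := this
      _ = (N:ℝ)*m + ((N:ℝ)*(K + c))/Real.log s := by field_simp
end
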